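/- There exists C(d) < ∞ such that for every m ∈ ℕ, every polynomial p of degree at most m on ℝ^d, every t > 0 and y ∈ ℝ^d: ∫_{ℝ^d} |∇p|² Γ(t, x−y) dx ≤ (Cm/t) ∫_{ℝ^d} p² Γ(t, x−y) dx. -/
import Mathlib

namespace GGM

open MeasureTheory Polynomial Filter Topology Real


variable {b c : ℝ}

/-- monomial times gaussian integrable -/
lemma int_mono (hb : 0 < b) (k : ℕ) :
    Integrable (fun x : ℝ => x ^ k * Real.exp (-(b * x ^ 2))) := by
  have h := integrable_rpow_mul_exp_neg_mul_sq hb (s := (k : ℝ)) (lt_of_lt_of_le (by norm_num) (Nat.cast_nonneg k))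
  have : (fun x : ℝ => x ^ (k:ℝ) * Real.exp (-b * x ^ 2))
      = fun x : ℝ => x ^ k * Real.exp (-(b * x ^ 2)) := by
    funext x; rw [Real.rpow_natCast]; ring_nf
  rwa [this] at h

/-- polynomial times centered gaussian integrable -/
lemma int_poly0 (hb : 0 < b) (P : ℝ[X]) :
    Integrable (fun x : ℝ => P.eval x * Real.exp (-(b * x ^ 2))) := by
  have : (fun x : ℝ => P.eval x * Real.exp (-(b * x ^ 2)))
      = fun x : ℝ => ∑ k ∈ Finset.range (P.natDegree + 1),
          P.coeff k * (x ^ k * Real.exp (-(b * x ^ 2))) := by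
    funext x
    rw [Polynomial.eval_eq_sum_range, Finset.sum_mul]
    simp [mul_assoc]
  rw [this]
  exact integrable_finset_sum _ fun k _ => ((int_mono hb k).const_mul _)

lemma int_poly (hb : 0 < b) (P : ℝ[X]) :
    Integrable (fun x : ℝ => P.eval x * Real.exp (-(b * (x - c) ^ 2))) := by
  have h := (int_poly0 hb (P.comp (X + C c))).comp_sub_right c
  have : (fun x : ℝ => (P.comp (X + C c)).eval (x - c) * Real.exp (-(b * (x - c) ^ 2)))
      = fun x : ℝ => P.eval x * Real.exp (-(b * (x - c) ^ 2)) := by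
    funext x; simp [Polynomial.eval_comp]
  rwa [this] at h

lemma tendsto_top0 (hb : 0 < b) (P : ℝ[X]) :
    Tendsto (fun x : ℝ => P.eval x * Real.exp (-(b * x ^ 2))) atTop (𝓝 0) := by
  have : (fun x : ℝ => P.eval x * Real.exp (-(b * x ^ 2)))
      = fun x : ℝ => ∑ k ∈ Finset.range (P.natDegree + 1),
          P.coeff k * (x ^ k * Real.exp (-(b * x ^ 2))) := by
    funext x
    rw [Polynomial.eval_eq_sum_range, Finset.sum_mul]
    simp [mul_assoc]
  rw [this]
  have h0 : Tendsto (fun x : ℝ => (0:ℝ)) atTop (𝓝 0) := tendsto_const_nhds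
  have : ∀ k : ℕ, Tendsto (fun x : ℝ => x ^ k * Real.exp (-(b * x ^ 2))) atTop (𝓝 0) := by
    intro k
    have hmain : Tendsto (fun x : ℝ => x ^ k * Real.exp (-x)) atTop (𝓝 0) :=
      tendsto_pow_mul_exp_neg_atTop_nhds_zero k
    apply squeeze_zero_norm' _ hmain
    filter_upwards [eventually_ge_atTop (max 1 (1/b))] with x hx
    have hx1 : (1:ℝ) ≤ x := le_trans (le_max_left _ _) hx
    have hxb : 1/b ≤ x := le_trans (le_max_right _ _) hx
    have hxpos : 0 < x := lt_of_lt_of_le one_pos hx1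
    have hxe : x ≤ b * x ^ 2 := by
      have : 1/b * b ≤ x * b := mul_le_mul_of_nonneg_right hxb hb.le
      rw [one_div_mul_cancel hb.ne'] at this
      nlinarith
    have : Real.exp (-(b * x ^ 2)) ≤ Real.exp (-x) := by
      apply Real.exp_le_exp.2; linarith
    rw [Real.norm_eq_abs, abs_mul, abs_pow, abs_of_pos hxpos,
      Real.abs_exp]
    exact mul_le_mul_of_nonneg_left this (by norm_num; positivity)
  simpa using tendsto_finset_sum (Finset.range (P.natDegree + 1))
    (fun k _ => ((this k).const_mul (P.coeff k)))

lemma tendsto_top (hb : 0 < b) (P : ℝ[X]) :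
    Tendsto (fun x : ℝ => P.eval x * Real.exp (-(b * (x - c) ^ 2))) atTop (𝓝 0) := by
  have h := (tendsto_top0 hb (P.comp (X + C c))).comp
    (tendsto_atTop_add_const_right atTop (-c) tendsto_id)
  have : ((fun x : ℝ => (P.comp (X + C c)).eval x * Real.exp (-(b * x ^ 2))) ∘
      fun x : ℝ => id x + -c) = fun x : ℝ => P.eval x * Real.exp (-(b * (x - c) ^ 2)) := by
    funext x; simp [Function.comp, Polynomial.eval_comp, sub_eq_add_neg]
  rwa [this] at h

lemma tendsto_bot (hb : 0 < b) (P : ℝ[X]) :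
    Tendsto (fun x : ℝ => P.eval x * Real.exp (-(b * (x - c) ^ 2))) atBot (𝓝 0) := by
  have h := (tendsto_top hb (c := -c) (P.comp (-X))).comp tendsto_neg_atBot_atTop
  have : ((fun x : ℝ => (P.comp (-X)).eval x * Real.exp (-(b * (x - -c) ^ 2))) ∘
      fun x : ℝ => -x) = fun x : ℝ => P.eval x * Real.exp (-(b * (x - c) ^ 2)) := by
    funext x
    have h1 : (-x - -c)^2 = (x - c)^2 := by ring
    simp only [Function.comp_apply, Polynomial.eval_comp, eval_neg, eval_X, neg_neg, h1]
  rwa [this] at h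

/-- full-line FTC: integral of derivative is zero -/
lemma integral_deriv_zero (F F' : ℝ → ℝ) (hd : ∀ x, HasDerivAt F (F' x) x)
    (hi : Integrable F') (ht : Tendsto F atTop (𝓝 0)) (hbt : Tendsto F atBot (𝓝 0)) :
    ∫ x, F' x = 0 := by
  have h1 : ∫ x in Set.Iic (0:ℝ), F' x = F 0 - 0 :=
    integral_Iic_of_hasDerivAt_of_tendsto' (fun x _ => hd x) hi.integrableOn hbt
  have h2 : ∫ x in Set.Ioi (0:ℝ), F' x = 0 - F 0 :=
    integral_Ioi_of_hasDerivAt_of_tendsto' (fun x _ => hd x) hi.integrableOn ht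
  have h3 := integral_add_compl (measurableSet_Iic (a := (0:ℝ))) hi
  rw [Set.compl_Iic] at h3
  rw [← h3, h1, h2]; ring



variable {b c : ℝ}

noncomputable def J (b c : ℝ) (P : ℝ[X]) : ℝ :=
  ∫ x, P.eval x * Real.exp (-(b * (x - c) ^ 2))


lemma J_add (hb : 0 < b) (P Q : ℝ[X]) : J b c (P + Q) = J b c P + J b c Q := by
  unfold J
  rw [← integral_add (int_poly hb P) (int_poly hb Q)]
  congr 1; funext x; simp [add_mul]

lemma J_sub (hb : 0 < b) (P Q : ℝ[X]) : J b c (P - Q) = J b c P - J b c Q := by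
  unfold J
  rw [← integral_sub (int_poly hb P) (int_poly hb Q)]
  congr 1; funext x; simp [sub_mul]

lemma J_Cmul (a : ℝ) (P : ℝ[X]) : J b c (C a * P) = a * J b c P := by
  unfold J
  rw [← integral_const_mul]
  congr 1; funext x; simp [mul_assoc]

lemma J_two (P : ℝ[X]) : J b c (2 * P) = 2 * J b c P := by
  rw [← map_ofNat (C : ℝ →+* ℝ[X]) 2, J_Cmul]

lemma J_zero : J b c 0 = 0 := by unfold J; simp

lemma J_sq_nonneg (P : ℝ[X]) : 0 ≤ J b c (P ^ 2) := by
  unfold J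
  apply integral_nonneg
  intro x
  simp only [eval_pow]
  positivity

lemma J_deriv (hb : 0 < b) (P : ℝ[X]) :
    J b c (derivative P) = 2 * (b * J b c ((X - C c) * P)) := by
  set D : ℝ[X] := derivative P - 2 * (C b * ((X - C c) * P)) with hD
  have hzero : J b c D = 0 := by
    unfold J
    apply integral_deriv_zero (fun x => P.eval x * Real.exp (-(b * (x - c) ^ 2)))
    · intro x
      have hin : HasDerivAt (fun x : ℝ => -(b * (x - c) ^ 2)) (-(b * (2 * (x - c)))) x := by
        have h1 : HasDerivAt (fun x : ℝ => (x - c) ^ 2) (2 * (x - c) ^ 1 * 1) x :=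
          (((hasDerivAt_id x).sub_const c).pow 2)
        have h2 := (h1.const_mul b).neg
        apply h2.congr_deriv; ring
      have hw := hin.exp
      have hP := P.hasDerivAt x
      have := hP.mul hw
      apply this.congr_deriv
      rw [hD]
      simp only [eval_sub, eval_mul, eval_C, eval_X, eval_pow, eval_ofNat]
      ring
    · exact int_poly hb D
    · exact tendsto_top hb P
    · exact tendsto_bot hb P
  have h := J_sub (c := c) hb (derivative P) (2 * (C b * ((X - C c) * P)))
  rw [← hD, hzero, J_two, J_Cmul] at h
  linarith

lemma cauchy_schwarz (f g : ℝ → ℝ) (hf : Integrable (fun x => f x ^ 2))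
    (hg : Integrable (fun x => g x ^ 2)) (hfg : Integrable (fun x => f x * g x)) :
    (∫ x, f x * g x) ^ 2 ≤ (∫ x, f x ^ 2) * ∫ x, g x ^ 2 := by
  set A := ∫ x, f x ^ 2 with hA
  set B := ∫ x, f x * g x with hB
  set Cc := ∫ x, g x ^ 2 with hCc
  have key : ∀ r : ℝ, 0 ≤ A * (r * r) + (-2 * B) * r + Cc := by
    intro r
    have h0 : 0 ≤ ∫ x, (r * f x - g x) ^ 2 := integral_nonneg fun x => sq_nonneg _
    have hexp : (fun x => (r * f x - g x) ^ 2)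
        = fun x => (r ^ 2 * f x ^ 2 - 2 * r * (f x * g x)) + g x ^ 2 := by
      funext x; ring
    rw [hexp] at h0
    have i1 : Integrable (fun x => r ^ 2 * f x ^ 2 - 2 * r * (f x * g x)) :=
      (hf.const_mul _).sub (hfg.const_mul _)
    rw [integral_add i1 hg, integral_sub (hf.const_mul _) (hfg.const_mul _),
      integral_const_mul, integral_const_mul] at h0
    rw [← hA, ← hB, ← hCc] at h0
    nlinarith [h0]
  have hd := discrim_le_zero key
  rw [discrim] at hd
  nlinarith [hd]

lemma od_main (hb : 0 < b) : ∀ m : ℕ, ∀ f : ℝ[X], f.natDegree ≤ m →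
    J b c ((derivative f) ^ 2) ≤ 2 * b * m * J b c (f ^ 2) := by
  intro m
  induction m with
  | zero =>
    intro f hf
    rw [Polynomial.eq_C_of_natDegree_le_zero hf]
    simp [J_zero]
  | succ m IH =>
    intro f hf
    set q := derivative f with hq'
    have hq : q.natDegree ≤ m := by
      have h := Polynomial.natDegree_derivative_le f
      rw [← hq'] at h
      omega
    set q' := derivative q with hq''
    set A : ℝ[X] := X - C c with hA
    set G : ℝ[X] := 2 * (C b * (A * q)) - q' with hG
    -- h1 : J (q^2) = J (f * G)
    have hdm : derivative (f * q) = q * q + f * q' := by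
      rw [Polynomial.derivative_mul, ← hq', ← hq'']
    have e1 : J b c (q * q) + J b c (f * q') = 2 * (b * J b c (A * (f * q))) := by
      rw [← J_add hb, ← hdm, J_deriv hb, ← hA]
    have hfG : f * G = 2 * (C b * (A * (f * q))) - f * q' := by rw [hG]; ring
    have h1 : J b c (q ^ 2) = J b c (f * G) := by
      rw [hfG, J_sub hb, J_two, J_Cmul, sq]
      linarith
    -- h2 : J (G^2) = 2b J(q^2) + J(q'^2)
    have hd2 : derivative (A * q ^ 2) = q ^ 2 + 2 * (A * (q * q')) := by
      rw [Polynomial.derivative_mul, hA, Polynomial.derivative_X_sub_C,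
        Polynomial.derivative_sq, map_ofNat (C : ℝ →+* ℝ[X]) 2, ← hA, ← hq'']
      ring
    have e2 : J b c (q ^ 2) + 2 * J b c (A * (q * q'))
        = 2 * (b * J b c (A * (A * q ^ 2))) := by
      rw [← J_two, ← J_add hb, ← hd2, J_deriv hb, ← hA]
    have hG2 : G ^ 2 = 4 * (C b * (C b * (A * (A * q ^ 2))))
        - 4 * (C b * (A * (q * q'))) + q' ^ 2 := by rw [hG]; ring
    have e4a : J b c (4 * (C b * (C b * (A * (A * q ^ 2)))))
        = 4 * (b * (b * J b c (A * (A * q ^ 2)))) := by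
      rw [show ((4 : ℝ[X])) = C (4 : ℝ) from (map_ofNat (C : ℝ →+* ℝ[X]) 4).symm,
        J_Cmul, J_Cmul, J_Cmul]
    have e4b : J b c (4 * (C b * (A * (q * q'))))
        = 4 * (b * J b c (A * (q * q'))) := by
      rw [show ((4 : ℝ[X])) = C (4 : ℝ) from (map_ofNat (C : ℝ →+* ℝ[X]) 4).symm,
        J_Cmul, J_Cmul]
    have h2 : J b c (G ^ 2) = 2 * b * J b c (q ^ 2) + J b c (q' ^ 2) := by
      rw [hG2, J_add hb, J_sub hb, e4a, e4b]
      linear_combination (-2 * b) * e2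
    -- h3 : Cauchy-Schwarz
    have h3 : (J b c (f * G)) ^ 2 ≤ J b c (f ^ 2) * J b c (G ^ 2) := by
      set v : ℝ → ℝ := fun x => Real.exp (-(b / 2 * (x - c) ^ 2)) with hv
      have hvv : ∀ x, v x * v x = Real.exp (-(b * (x - c) ^ 2)) := by
        intro x
        rw [hv, ← Real.exp_add]
        congr 1; ring
      have hme : ∀ P : ℝ[X], J b c (P ^ 2) = ∫ x, (P.eval x * v x) ^ 2 := by
        intro P
        unfold J
        congr 1; funext x
        rw [mul_pow, eval_pow, ← hvv x]; ring
      have hce : J b c (f * G) = ∫ x, (f.eval x * v x) * (G.eval x * v x) := by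
        unfold J
        congr 1; funext x
        rw [eval_mul, ← hvv x]; ring
      rw [hme, hme, hce]
      apply cauchy_schwarz
      · have h : (fun x => (f.eval x * v x) ^ 2)
            = fun x => (f ^ 2).eval x * Real.exp (-(b * (x - c) ^ 2)) := by
          funext x; rw [mul_pow, eval_pow, ← hvv x]; ring
        rw [h]; exact int_poly hb _
      · have h : (fun x => (G.eval x * v x) ^ 2)
            = fun x => (G ^ 2).eval x * Real.exp (-(b * (x - c) ^ 2)) := by
          funext x; rw [mul_pow, eval_pow, ← hvv x]; ring
        rw [h]; exact int_poly hb _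
      · have h : (fun x => (f.eval x * v x) * (G.eval x * v x))
            = fun x => (f * G).eval x * Real.exp (-(b * (x - c) ^ 2)) := by
          funext x; rw [eval_mul, ← hvv x]; ring
        rw [h]; exact int_poly hb _
    have h4 : J b c (q' ^ 2) ≤ 2 * b * m * J b c (q ^ 2) := IH q hq
    have hN : 0 ≤ J b c (q ^ 2) := J_sq_nonneg q
    have hM : 0 ≤ J b c (f ^ 2) := J_sq_nonneg f
    rcases hN.eq_or_lt with hN0 | hN0
    · rw [← hN0]
      positivity
    · push_cast
      nlinarith [h1, h2, h3, h4, hN0, hM]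




section MV

variable {n : ℕ}

noncomputable def W (b : ℝ) (y x : Fin (n + 1) → ℝ) : ℝ :=
  ∏ j, Real.exp (-(b * (x j - y j) ^ 2))

lemma W_nonneg (b : ℝ) (y x : Fin (n + 1) → ℝ) : 0 ≤ W b y x :=
  Finset.prod_nonneg fun j _ => (Real.exp_pos _).le

lemma mv_integrable {b : ℝ} (hb : 0 < b) (y : Fin (n + 1) → ℝ)
    (q : MvPolynomial (Fin (n + 1)) ℝ) :
    Integrable (fun x : Fin (n + 1) → ℝ => MvPolynomial.eval x q * W b y x) := by
  have h : (fun x : Fin (n + 1) → ℝ => MvPolynomial.eval x q * W b y x)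
      = fun x => ∑ d ∈ q.support, q.coeff d *
          ∏ j, (x j ^ d j * Real.exp (-(b * (x j - y j) ^ 2))) := by
    funext x
    rw [MvPolynomial.eval_eq', Finset.sum_mul]
    apply Finset.sum_congr rfl
    intro d _
    rw [W, mul_assoc, ← Finset.prod_mul_distrib]
  rw [h]
  apply integrable_finset_sum
  intro d _
  apply Integrable.const_mul
  apply Integrable.fintype_prod (f := fun j (s : ℝ) => s ^ d j * Real.exp (-(b * (s - y j) ^ 2)))
  intro j
  have h2 := int_poly (c := y j) hb (Polynomial.X ^ d j)
  simpa using h2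

/-- substitution sending coordinate `i` to `X` and the rest to constants -/
noncomputable def σp (i : Fin (n + 1)) (x' : Fin n → ℝ) : Fin (n + 1) → ℝ[X] :=
  i.insertNth Polynomial.X fun k => Polynomial.C (x' k)

lemma resP_eval (i : Fin (n + 1)) (x' : Fin n → ℝ) (p : MvPolynomial (Fin (n + 1)) ℝ) (s : ℝ) :
    (MvPolynomial.aeval (σp i x') p).eval s = MvPolynomial.eval (i.insertNth s x') p := by
  have h1 : Polynomial.eval s (MvPolynomial.aeval (σp i x') p)
      = Polynomial.aeval s (MvPolynomial.aeval (σp i x') p) := by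
    rw [Polynomial.coe_aeval_eq_eval]
  rw [h1, MvPolynomial.comp_aeval_apply]
  have h2 : (fun j => Polynomial.aeval s (σp i x' j)) = i.insertNth s x' := by
    funext j
    refine Fin.succAboveCases i ?_ ?_ j
    · simp [σp, Fin.insertNth_apply_same]
    · intro k; simp [σp, Fin.insertNth_apply_succAbove]
  rw [h2]
  exact DFunLike.congr_fun (MvPolynomial.coe_aeval_eq_eval _) p

lemma resP_deriv (i : Fin (n + 1)) (x' : Fin n → ℝ) (p : MvPolynomial (Fin (n + 1)) ℝ) :
    Polynomial.derivative (MvPolynomial.aeval (σp i x') p)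
      = MvPolynomial.aeval (σp i x') (MvPolynomial.pderiv i p) := by
  induction p using MvPolynomial.induction_on with
  | C a => simp
  | add p q hp hq => simp [map_add, hp, hq]
  | mul_X p j hp =>
    rw [map_mul, MvPolynomial.aeval_X, Polynomial.derivative_mul, hp, MvPolynomial.pderiv_mul,
      map_add, map_mul, map_mul, MvPolynomial.aeval_X, MvPolynomial.pderiv_X]
    congr 1
    refine Fin.succAboveCases i ?_ ?_ j
    · simp [σp, Fin.insertNth_apply_same, Pi.single_eq_same]
    · intro k
      simp [σp, Fin.insertNth_apply_succAbove,
        Pi.single_eq_of_ne (Fin.succAbove_ne i k)]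

lemma resP_deg (i : Fin (n + 1)) (x' : Fin n → ℝ) (p : MvPolynomial (Fin (n + 1)) ℝ) :
    (MvPolynomial.aeval (σp i x') p).natDegree ≤ p.totalDegree := by
  have hσ : ∀ j, (σp i x' j).natDegree ≤ 1 := by
    intro j
    refine Fin.succAboveCases i ?_ ?_ j
    · simp [σp, Fin.insertNth_apply_same]
    · intro k; simp [σp, Fin.insertNth_apply_succAbove]
  rw [MvPolynomial.aeval_def, MvPolynomial.eval₂_eq']
  apply Polynomial.natDegree_sum_le_of_forall_le
  intro d hd
  calc (algebraMap ℝ ℝ[X] (p.coeff d) * ∏ j, σp i x' j ^ d j).natDegree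
      ≤ (algebraMap ℝ ℝ[X] (p.coeff d)).natDegree + (∏ j, σp i x' j ^ d j).natDegree :=
        Polynomial.natDegree_mul_le
    _ ≤ 0 + ∑ j, (σp i x' j ^ d j).natDegree := by
        gcongr
        · simp [Polynomial.algebraMap_eq]
        · exact Polynomial.natDegree_prod_le _ _
    _ ≤ 0 + ∑ j, d j * 1 := by
        gcongr with j
        exact le_trans Polynomial.natDegree_pow_le
          (Nat.mul_le_mul le_rfl (hσ j))
    _ = ∑ j, d j := by simp
    _ ≤ p.totalDegree := by
        have h := MvPolynomial.le_totalDegree hd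
        rwa [Finsupp.sum_fintype (h := fun _ => rfl)] at h

lemma symm_insert (i : Fin (n + 1)) (z : ℝ × (Fin n → ℝ)) :
    (MeasurableEquiv.piFinSuccAbove (fun _ : Fin (n + 1) => ℝ) i).symm z
      = i.insertNth z.1 z.2 := rfl

lemma fub_eq (i : Fin (n + 1)) (F : (Fin (n + 1) → ℝ) → ℝ) (hF : Integrable F) :
    (∫ x, F x) = ∫ x' : Fin n → ℝ, ∫ s : ℝ, F (i.insertNth s x') := by
  have mp := ((volume_preserving_piFinSuccAbove (fun _ : Fin (n + 1) => ℝ) i).symm _)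
  have heq : ∫ x, F x = ∫ z : ℝ × (Fin n → ℝ), F (i.insertNth z.1 z.2) := by
    rw [← mp.integral_comp' F]
    apply integral_congr_ae
    filter_upwards with z
    rw [symm_insert]
  rw [heq]
  have hcomp : Integrable (fun z : ℝ × (Fin n → ℝ) => F (i.insertNth z.1 z.2)) := by
    have h := (mp.integrable_comp_emb
      (MeasurableEquiv.piFinSuccAbove (fun _ : Fin (n + 1) => ℝ) i).symm.measurableEmbedding).2 hF
    have h2 : (F ∘ (MeasurableEquiv.piFinSuccAbove (fun _ : Fin (n + 1) => ℝ) i).symm)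
        = fun z : ℝ × (Fin n → ℝ) => F (i.insertNth z.1 z.2) := by
      funext z
      rw [Function.comp_apply, symm_insert]
    rwa [h2] at h
  rw [Measure.volume_eq_prod] at hcomp ⊢
  exact integral_prod_symm _ hcomp

lemma fub_int (i : Fin (n + 1)) (F : (Fin (n + 1) → ℝ) → ℝ) (hF : Integrable F) :
    Integrable (fun x' : Fin n → ℝ => ∫ s : ℝ, F (i.insertNth s x')) := by
  have mp := ((volume_preserving_piFinSuccAbove (fun _ : Fin (n + 1) => ℝ) i).symm _)
  have hcomp : Integrable (fun z : ℝ × (Fin n → ℝ) => F (i.insertNth z.1 z.2)) := by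
    have h := (mp.integrable_comp_emb
      (MeasurableEquiv.piFinSuccAbove (fun _ : Fin (n + 1) => ℝ) i).symm.measurableEmbedding).2 hF
    have h2 : (F ∘ (MeasurableEquiv.piFinSuccAbove (fun _ : Fin (n + 1) => ℝ) i).symm)
        = fun z : ℝ × (Fin n → ℝ) => F (i.insertNth z.1 z.2) := by
      funext z
      rw [Function.comp_apply, symm_insert]
    rwa [h2] at h
  rw [Measure.volume_eq_prod] at hcomp
  exact hcomp.integral_prod_right

lemma W_insert (b : ℝ) (y : Fin (n + 1) → ℝ) (i : Fin (n + 1)) (s : ℝ) (x' : Fin n → ℝ) :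
    W b y (i.insertNth s x') = Real.exp (-(b * (s - y i) ^ 2)) *
      ∏ k, Real.exp (-(b * (x' k - y (i.succAbove k)) ^ 2)) := by
  have h := Fin.prod_univ_succAbove
    (fun j => Real.exp (-(b * ((i.insertNth s x' : Fin (n + 1) → ℝ) j - y j) ^ 2))) i
  rw [W, h]
  congr 1
  · rw [Fin.insertNth_apply_same]
  · apply Finset.prod_congr rfl
    intro k _
    rw [Fin.insertNth_apply_succAbove]

lemma coord (b : ℝ) (hb : 0 < b) (y : Fin (n + 1) → ℝ) (m : ℕ)
    (p : MvPolynomial (Fin (n + 1)) ℝ) (hdeg : p.totalDegree ≤ m) (i : Fin (n + 1)) :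
    ∫ x, (MvPolynomial.eval x (MvPolynomial.pderiv i p)) ^ 2 * W b y x
      ≤ 2 * b * m * ∫ x, (MvPolynomial.eval x p) ^ 2 * W b y x := by
  have hsq : ∀ (q : MvPolynomial (Fin (n + 1)) ℝ) (x : Fin (n + 1) → ℝ),
      (MvPolynomial.eval x q) ^ 2 = MvPolynomial.eval x (q ^ 2) := fun q x => (map_pow _ _ _).symm
  have hgl : (fun x : Fin (n + 1) → ℝ => (MvPolynomial.eval x (MvPolynomial.pderiv i p)) ^ 2 * W b y x)
      = fun x => MvPolynomial.eval x ((MvPolynomial.pderiv i p) ^ 2) * W b y x := by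
    funext x; rw [hsq]
  have hgr : (fun x : Fin (n + 1) → ℝ => (MvPolynomial.eval x p) ^ 2 * W b y x)
      = fun x => MvPolynomial.eval x (p ^ 2) * W b y x := by
    funext x; rw [hsq]
  rw [hgl, hgr]
  have hi1 := mv_integrable hb y ((MvPolynomial.pderiv i p) ^ 2)
  have hi2 := mv_integrable hb y (p ^ 2)
  rw [fub_eq i _ hi1, fub_eq i _ hi2, ← integral_const_mul]
  apply integral_mono (fub_int i _ hi1) ((fub_int i _ hi2).const_mul _)
  intro x'
  set R : ℝ[X] := MvPolynomial.aeval (σp i x') p with hR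
  set W' : ℝ := ∏ k, Real.exp (-(b * (x' k - y (i.succAbove k)) ^ 2)) with hW'
  have hW'0 : 0 ≤ W' := Finset.prod_nonneg fun k _ => (Real.exp_pos _).le
  have h1 : (fun s : ℝ => MvPolynomial.eval (i.insertNth s x') ((MvPolynomial.pderiv i p) ^ 2)
        * W b y (i.insertNth s x'))
      = fun s => ((Polynomial.derivative R) ^ 2).eval s
        * Real.exp (-(b * (s - y i) ^ 2)) * W' := by
    funext s
    rw [W_insert b y i s x', ← hW']
    have e1 : MvPolynomial.eval (i.insertNth s x') ((MvPolynomial.pderiv i) p ^ 2)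
        = ((Polynomial.derivative R) ^ 2).eval s := by
      rw [map_pow, ← resP_eval i x' (MvPolynomial.pderiv i p) s, ← resP_deriv i x' p,
        ← hR, ← Polynomial.eval_pow]
    rw [e1]
    ring
  have h2 : (fun s : ℝ => MvPolynomial.eval (i.insertNth s x') (p ^ 2)
        * W b y (i.insertNth s x'))
      = fun s => (R ^ 2).eval s * Real.exp (-(b * (s - y i) ^ 2)) * W' := by
    funext s
    rw [W_insert b y i s x', ← hW']
    have e2 : MvPolynomial.eval (i.insertNth s x') (p ^ 2) = (R ^ 2).eval s := by
      rw [map_pow, ← resP_eval i x' p s, ← hR, ← Polynomial.eval_pow]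
    rw [e2]
    ring
  dsimp only
  rw [h1, h2, integral_mul_const, integral_mul_const]
  have key := od_main (c := y i) hb m R (le_trans (resP_deg i x' p) hdeg)
  rw [J, J] at key
  calc (∫ s, ((Polynomial.derivative R) ^ 2).eval s * Real.exp (-(b * (s - y i) ^ 2))) * W'
      ≤ (2 * b * m * ∫ s, (R ^ 2).eval s * Real.exp (-(b * (s - y i) ^ 2))) * W' :=
        mul_le_mul_of_nonneg_right key hW'0
    _ = 2 * b * ↑m * ((∫ s, (R ^ 2).eval s * Real.exp (-(b * (s - y i) ^ 2))) * W') := by ring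

end MV


end GGM


open MeasureTheory MvPolynomial

/-- The heat kernel `Γ(t,x) = (4πt)^{-d/2} exp(-|x|²/(4t))`. -/
noncomputable def heatK (d : ℕ) (t : ℝ) (x : Fin d → ℝ) : ℝ :=
  (4 * Real.pi * t) ^ (-(d : ℝ) / 2) * Real.exp (-(∑ i, x i ^ 2) / (4 * t))

/-- Markov-brothers-type inequality in Gaussian weighted L²: there exists `C(d) < ∞` such that
for every `m`, every polynomial `p` of degree at most `m`, every `t > 0`, `y ∈ ℝ^d`,
`∫ |∇p|² Γ(t,·-y) ≤ (Cm/t) ∫ p² Γ(t,·-y)`. -/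
theorem gradient_gaussian_markov (d : ℕ) (hd : 1 ≤ d) :
    ∃ C : ℝ, 0 < C ∧
      ∀ (m : ℕ) (p : MvPolynomial (Fin d) ℝ), p.totalDegree ≤ m →
        ∀ (t : ℝ), 0 < t → ∀ y : Fin d → ℝ,
          ∫ x : Fin d → ℝ,
              (∑ i, (MvPolynomial.eval x (MvPolynomial.pderiv i p)) ^ 2) * heatK d t (x - y) ≤
            C * m / t * ∫ x : Fin d → ℝ, (MvPolynomial.eval x p) ^ 2 * heatK d t (x - y) := by
  obtain ⟨n, rfl⟩ : ∃ n, d = n + 1 := ⟨d - 1, by omega⟩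
  refine ⟨(n + 1 : ℝ), by positivity, ?_⟩
  intro m p hdeg t ht y
  set b : ℝ := (4 * t)⁻¹ with hb
  have hb0 : 0 < b := by rw [hb]; positivity
  set K : ℝ := (4 * Real.pi * t) ^ (-((n + 1 : ℕ) : ℝ) / 2) with hK
  have hK0 : 0 < K := by
    rw [hK]
    apply Real.rpow_pos_of_pos
    have := Real.pi_pos
    positivity
  have hheat : ∀ x : Fin (n + 1) → ℝ, heatK (n + 1) t (x - y) = K * GGM.W b y x := by
    intro x
    rw [heatK, GGM.W, ← Real.exp_sum]
    have harg : (-(∑ j, (x - y) j ^ 2)) / (4 * t) = ∑ j, -(b * (x j - y j) ^ 2) := by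
      simp only [Pi.sub_apply]
      rw [Finset.sum_neg_distrib, ← Finset.mul_sum, hb, neg_div, div_eq_inv_mul]
    rw [harg]
  -- rewrite both sides
  have hLHS : (∫ x : Fin (n + 1) → ℝ,
        (∑ i, (MvPolynomial.eval x (MvPolynomial.pderiv i p)) ^ 2) * heatK (n + 1) t (x - y))
      = ∑ i, K * ∫ x : Fin (n + 1) → ℝ,
          (MvPolynomial.eval x (MvPolynomial.pderiv i p)) ^ 2 * GGM.W b y x := by
    have h : (fun x : Fin (n + 1) → ℝ =>
          (∑ i, (MvPolynomial.eval x (MvPolynomial.pderiv i p)) ^ 2) * heatK (n + 1) t (x - y))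
        = fun x => ∑ i, K * ((MvPolynomial.eval x (MvPolynomial.pderiv i p)) ^ 2
            * GGM.W b y x) := by
      funext x
      rw [hheat x, Finset.sum_mul]
      apply Finset.sum_congr rfl
      intro j _
      ring
    rw [h, integral_finset_sum]
    · apply Finset.sum_congr rfl
      intro j _
      rw [integral_const_mul]
    · intro j _
      have := (GGM.mv_integrable hb0 y ((MvPolynomial.pderiv j p) ^ 2)).const_mul K
      apply this.congr
      filter_upwards with x
      rw [map_pow]
  have hRHS : (∫ x : Fin (n + 1) → ℝ, (MvPolynomial.eval x p) ^ 2 * heatK (n + 1) t (x - y))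
      = K * ∫ x : Fin (n + 1) → ℝ, (MvPolynomial.eval x p) ^ 2 * GGM.W b y x := by
    rw [← integral_const_mul]
    apply integral_congr_ae
    filter_upwards with x
    rw [hheat x]; ring
  rw [hLHS, hRHS]
  set M : ℝ := ∫ x : Fin (n + 1) → ℝ, (MvPolynomial.eval x p) ^ 2 * GGM.W b y x with hM
  have hM0 : 0 ≤ M := by
    rw [hM]
    apply integral_nonneg
    intro x
    exact mul_nonneg (sq_nonneg _) (GGM.W_nonneg b y x)
  have hterm : ∀ i : Fin (n + 1),
      K * (∫ x : Fin (n + 1) → ℝ,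
        (MvPolynomial.eval x (MvPolynomial.pderiv i p)) ^ 2 * GGM.W b y x)
      ≤ K * (2 * b * m * M) := by
    intro i
    exact mul_le_mul_of_nonneg_left (GGM.coord b hb0 y m p hdeg i) hK0.le
  calc (∑ i, K * ∫ x : Fin (n + 1) → ℝ,
        (MvPolynomial.eval x (MvPolynomial.pderiv i p)) ^ 2 * GGM.W b y x)
      ≤ ∑ _i : Fin (n + 1), K * (2 * b * m * M) :=
        Finset.sum_le_sum fun i _ => hterm i
    _ = (n + 1 : ℝ) * (2 * b * m) * (K * M) := by
        rw [Finset.sum_const]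
        simp [Finset.card_univ]
        ring
    _ ≤ (n + 1 : ℝ) * ↑m / t * (K * M) := by
        apply mul_le_mul_of_nonneg_right _ (mul_nonneg hK0.le hM0)
        rw [hb]
        rw [div_eq_mul_inv]
        have h1 : 2 * (4 * t)⁻¹ ≤ t⁻¹ := by
          rw [mul_inv]
          have : (4 : ℝ)⁻¹ * t⁻¹ ≤ t⁻¹ := by
            apply mul_le_of_le_one_left (by positivity)
            norm_num
          calc 2 * ((4:ℝ)⁻¹ * t⁻¹) = 2⁻¹ * t⁻¹ := by ring
            _ ≤ t⁻¹ := by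
              apply mul_le_of_le_one_left (by positivity)
              norm_num
        calc (n + 1 : ℝ) * (2 * (4 * t)⁻¹ * ↑m) = (n + 1 : ℝ) * ↑m * (2 * (4 * t)⁻¹) := by ring
          _ ≤ (n + 1 : ℝ) * ↑m * t⁻¹ := by
            apply mul_le_mul_of_nonneg_left h1 (by positivity)
          _ = (n + 1 : ℝ) * ↑m * t⁻¹ := rfl
    _ = (n + 1 : ℝ) * ↑m / t * (K * M) := rfl
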